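/- Let V₇ be a 7-dimensional vector space over an algebraically closed field of characteristic zero and let S₃ ⊆ ∧²V₇* be a 3-dimensional space of alternating forms such that every nonzero σ ∈ S₃ has rank 6. Then the map from nonzero elements of S₃ (up to scalar) to lines in V₇, sending σ to its kernel line ker(σ), is injective: if ker(σ₁) = ker(σ₂) for σ₁, σ₂ ∈ S₃ nonzero, then σ₁ and σ₂ are proportional. -/

import Mathlib

open Module

/-- For a nondegenerate net of skew forms on a 7-dimensional space, the map sending a
nonzero form in the net to its kernel line is injective up to scalars. -/
theorem net_kernel_map_injective (k : Type) [Field k] [IsAlgClosed k] [CharZero k]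
    (V : Type) [AddCommGroup V] [Module k V] [FiniteDimensional k V]
    (hV : finrank k V = 7)
    (S₃ : Submodule k (V →ₗ[k] V →ₗ[k] k))
    (halt : ∀ σ ∈ S₃, ∀ v, σ v v = 0)
    (hdim : finrank k S₃ = 3)
    (hnd : ∀ σ ∈ S₃, σ ≠ 0 → finrank k (LinearMap.range σ) = 6) :
    ∀ σ₁ ∈ S₃, ∀ σ₂ ∈ S₃, σ₁ ≠ 0 → σ₂ ≠ 0 →
      LinearMap.ker σ₁ = LinearMap.ker σ₂ → ∃ c : k, σ₂ = c • σ₁ := by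
  intro σ₁ hσ₁ σ₂ hσ₂ hne₁ hne₂ hker
  -- kernels are 1-dimensional
  have hrn₁ := LinearMap.finrank_range_add_finrank_ker σ₁
  rw [hnd σ₁ hσ₁ hne₁, hV] at hrn₁
  have hker₁ : finrank k (LinearMap.ker σ₁) = 1 := by omega
  -- pick a nonzero kernel vector u
  obtain ⟨⟨u, hu_mem⟩, hu0⟩ : ∃ x : LinearMap.ker σ₁, x ≠ 0 := by
    have : Nontrivial (LinearMap.ker σ₁) := by
      apply Module.nontrivial_of_finrank_pos (R := k); omega
    exact exists_ne 0
  have hu_ne : u ≠ 0 := fun h => hu0 (Subtype.ext h)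
  have hσ₁u : σ₁ u = 0 := hu_mem
  have hσ₂u : σ₂ u = 0 := by rw [hker] at hu_mem; exact hu_mem
  -- the common annihilator subspace A = ker (eval u)
  set ev : Module.Dual k (V →ₗ[k] k) := Module.Dual.eval k V u with hev
  have hev_surj : Function.Surjective ev := by
    rw [← LinearMap.range_eq_top]
    have hne : ev ≠ 0 := by
      intro h
      obtain ⟨φ, hφ⟩ : ∃ φ : Module.Dual k V, φ u ≠ 0 := by
        by_contra hc
        push_neg at hc
        exact hu_ne ((Module.forall_dual_apply_eq_zero_iff k u).mp hc)
      exact hφ (by simpa [hev, Module.Dual.eval] using congrFun (congrArg DFunLike.coe h) φ)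
    obtain ⟨φ, hφ⟩ : ∃ φ : Module.Dual k V, ev φ ≠ 0 := by
      by_contra hc
      push_neg at hc
      exact hne (LinearMap.ext hc)
    apply Submodule.eq_top_of_finrank_eq
    apply le_antisymm (Submodule.finrank_le _)
    rw [Module.finrank_self]
    have hnt : Nontrivial (LinearMap.range ev) :=
      ⟨⟨ev φ, LinearMap.mem_range_self ev φ⟩, 0, by simpa [Subtype.ext_iff] using hφ⟩
    exact Module.finrank_pos_iff.mpr hnt
  have hA : finrank k (LinearMap.ker ev) = 6 := by
    have := LinearMap.finrank_range_add_finrank_ker ev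
    rw [LinearMap.range_eq_top.mpr hev_surj] at this
    have h7 : finrank k (V →ₗ[k] k) = 7 := by
      have h := Subspace.dual_finrank_eq (K := k) (V := V)
      rw [hV] at h; exact h
    rw [finrank_top, Module.finrank_self, h7] at this
    omega
  -- skewness: for σ ∈ S₃, σ a b = - σ b a
  have hskew : ∀ σ ∈ S₃, ∀ a b : V, σ a b = - σ b a := by
    intro σ hσ a b
    have h := halt σ hσ (a + b)
    have ha := halt σ hσ a
    have hb := halt σ hσ b
    simp only [map_add, LinearMap.add_apply, ha, hb] at h
    linear_combination h
  -- ranges of σ₁ and σ₂ both equal A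
  have hrange : ∀ σ ∈ S₃, σ ≠ 0 → σ u = 0 → LinearMap.range σ = LinearMap.ker ev := by
    intro σ hσ hne hσu
    apply Submodule.eq_of_le_of_finrank_eq
    · rintro φ ⟨v, rfl⟩
      show ev (σ v) = 0
      have : σ v u = - σ u v := hskew σ hσ v u
      simp [hev, Module.Dual.eval, this, hσu]
    · rw [hnd σ hσ hne, hA]
  have hr₁ : LinearMap.range σ₁ = LinearMap.ker ev := hrange σ₁ hσ₁ hne₁ hσ₁u
  have hr₂ : LinearMap.range σ₂ = LinearMap.ker ev := hrange σ₂ hσ₂ hne₂ hσ₂u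
  -- build the endomorphism of range σ₁
  haveI : Module.Projective k (LinearMap.range σ₁) := by
    have : Module.Free k (LinearMap.range σ₁) := by
      have := Module.Free.of_divisionRing k (LinearMap.range σ₁)
      exact this
    exact Module.Projective.of_free
  obtain ⟨g, hg⟩ := σ₁.rangeRestrict.exists_rightInverse_of_surjective
    (LinearMap.range_eq_top.mpr σ₁.surjective_rangeRestrict)
  have hr21 : LinearMap.range σ₂ ≤ LinearMap.range σ₁ := by rw [hr₁, hr₂]
  set E : Module.End k (LinearMap.range σ₁) :=
    (σ₂.codRestrict (LinearMap.range σ₁)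
      (fun v => hr21 (LinearMap.mem_range_self σ₂ v))).comp g with hE
  have : Nontrivial (LinearMap.range σ₁) := by
    apply Module.nontrivial_of_finrank_pos (R := k)
    rw [hnd σ₁ hσ₁ hne₁]; omega
  obtain ⟨c, hc⟩ := Module.End.exists_eigenvalue (K := k) (V := LinearMap.range σ₁) E
  obtain ⟨φ, hφ⟩ := hc.exists_hasEigenvector
  have hφ_ne : φ ≠ 0 := hφ.right
  have hEφ : E φ = c • φ := hφ.apply_eq_smul
  set v : V := g φ with hv
  have hσ₁v : σ₁ v = (φ : V →ₗ[k] k) := by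
    have := congrFun (congrArg DFunLike.coe hg) φ
    simp only [LinearMap.comp_apply, LinearMap.id_apply] at this
    have := congrArg Subtype.val this
    simpa [LinearMap.rangeRestrict] using this
  have hσ₂v : σ₂ v = c • (φ : V →ₗ[k] k) := by
    have := congrArg Subtype.val hEφ
    simpa [hE, LinearMap.comp_apply, LinearMap.codRestrict] using this
  -- the combination σ₂ - c • σ₁ kills both u and v
  refine ⟨c, ?_⟩
  by_contra hco
  set σ : V →ₗ[k] V →ₗ[k] k := σ₂ - c • σ₁ with hσdef
  have hσS : σ ∈ S₃ := by rw [hσdef]; exact S₃.sub_mem (x := σ₂) (y := c • σ₁) hσ₂ (S₃.smul_mem c hσ₁)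
  have hσ_ne : σ ≠ 0 := by
    intro h
    apply hco
    have : σ₂ - c • σ₁ = 0 := h
    exact (sub_eq_zero (a := σ₂) (b := c • σ₁)).mp this
  have hσu : σ u = 0 := by simp [hσdef, hσ₂u, hσ₁u]
  have hσv : σ v = 0 := by simp [hσdef, hσ₂v, hσ₁v]
  -- but ker σ is 1-dimensional and contains u, so ker σ = span u
  have hrnσ := LinearMap.finrank_range_add_finrank_ker σ
  rw [hnd σ hσS hσ_ne, hV] at hrnσ
  have hkerσ : finrank k (LinearMap.ker σ) = 1 := by omega
  have hspan : (k ∙ u) = LinearMap.ker σ := by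
    apply Submodule.eq_of_le_of_finrank_eq
    · rw [Submodule.span_singleton_le_iff_mem]; exact hσu
    · rw [hkerσ, finrank_span_singleton hu_ne]
  have hv_mem : v ∈ (k ∙ u) := by rw [hspan]; exact hσv
  obtain ⟨a, ha⟩ := Submodule.mem_span_singleton.mp hv_mem
  apply hφ_ne
  ext1
  have : σ₁ v = a • σ₁ u := by rw [← ha]; simp
  rw [hσ₁v, hσ₁u] at this
  simpa using this
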